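/- Let (X,d) be a compact metric space and f: X → X continuous. For every x ∈ X, the ω-limit set ω(x) is internally chain transitive: for any a, b ∈ ω(x) and any δ > 0 there is a finite sequence a = y_0, y_1, …, y_N = b with N ≥ 1, all y_i ∈ ω(x), and d(f(y_i), y_{i+1}) < δ for all i < N. -/

import Mathlib

open Filter Metric Topology Set

def omegaSeq {X : Type*} [MetricSpace X] (u : ℕ → X) : Set X :=
  ⋂ M : ℕ, closure (u '' Set.Ioi M)

def omegaPt {X : Type*} [MetricSpace X] (f : X → X) (x : X) : Set X :=
  omegaSeq (fun n => f^[n] x)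

def omegaZ {X : Type*} [MetricSpace X] (u : ℤ → X) : Set X :=
  ⋂ M : ℕ, closure (u '' {n : ℤ | (M : ℤ) < n})

def alphaZ {X : Type*} [MetricSpace X] (u : ℤ → X) : Set X :=
  ⋂ M : ℕ, closure (u '' {n : ℤ | n < -(M : ℤ)})

/-- `A` is internally chain transitive for `f`. -/
def chainTransitive {X : Type*} [MetricSpace X] (f : X → X) (A : Set X) : Prop :=
  ∀ a ∈ A, ∀ b ∈ A, ∀ δ > (0:ℝ), ∃ N : ℕ, 1 ≤ N ∧ ∃ y : ℕ → X,
    y 0 = a ∧ y N = b ∧ (∀ i ≤ N, y i ∈ A) ∧ ∀ i < N, dist (f (y i)) (y (i+1)) < δ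

/-- `u` is a full trajectory of `f`. -/
def fullTraj {X : Type*} (f : X → X) (u : ℤ → X) : Prop := ∀ i : ℤ, f (u i) = u (i + 1)

/-- `u` is a two-sided asymptotic pseudo-orbit of `f`. -/
def twoSidedAsymptotic {X : Type*} [MetricSpace X] (f : X → X) (u : ℤ → X) : Prop :=
  Filter.Tendsto (fun i : ℤ => dist (f (u i)) (u (i + 1))) Filter.atTop (nhds 0) ∧
  Filter.Tendsto (fun i : ℤ => dist (f (u i)) (u (i + 1))) Filter.atBot (nhds 0)

/-- The γ-limit set of a point. -/
def gammaLimit {X : Type*} [MetricSpace X] (f : X → X) (x : X) : Set X :=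
  {y | y ∈ omegaPt f x ∧ ∃ (ys : ℕ → X) (ns : ℕ → ℕ), StrictMono ns ∧
    (∀ i, f^[ns i] (ys i) = x) ∧ Filter.Tendsto ys Filter.atTop (nhds y)}

theorem stmt2 {X : Type*} [MetricSpace X] [CompactSpace X] (f : X → X)
    (hf : Continuous f) (x : X) :
    chainTransitive f (omegaPt f x) := by
  classical
  set u : ℕ → X := fun n => f^[n] x with hu
  have hfu : ∀ n, f (u n) = u (n + 1) := fun n => (Function.iterate_succ_apply' f n x).symm
  have hωdef : omegaPt f x = ⋂ M : ℕ, closure (u '' Set.Ioi M) := rfl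
  have hKmono : ∀ {M M' : ℕ}, M ≤ M' →
      closure (u '' Set.Ioi M') ⊆ closure (u '' Set.Ioi M) := by
    intro M M' h
    exact closure_mono (Set.image_mono (Set.Ioi_subset_Ioi h))
  -- the orbit is attracted to the omega limit set
  have hattr : ∀ ε > (0:ℝ), ∃ M : ℕ, ∀ n, M < n →
      ∃ z ∈ omegaPt f x, dist (u n) z < ε := by
    intro ε hε
    have hsub : omegaPt f x ⊆ Metric.thickening ε (omegaPt f x) :=
      Metric.self_subset_thickening hε _
    have hKT : (closure (u '' Set.Ioi 0) ∩ (Metric.thickening ε (omegaPt f x))ᶜ) ∩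
        ⋂ M : ℕ, closure (u '' Set.Ioi M) = ∅ := by
      ext p
      simp only [Set.mem_inter_iff, Set.mem_empty_iff_false, iff_false, not_and,
        Set.mem_compl_iff]
      rintro ⟨_, hpc⟩ hpω
      exact hpc (hsub (hωdef ▸ hpω))
    obtain ⟨t, ht⟩ :=
      (((isClosed_closure).isCompact).inter_right
        (Metric.isOpen_thickening.isClosed_compl)).elim_finite_subfamily_closed
        (fun M : ℕ => closure (u '' Set.Ioi M)) (fun M => isClosed_closure) hKT
    refine ⟨t.sup id, fun n hn => ?_⟩
    have hun : u n ∈ closure (u '' Set.Ioi (t.sup id)) := subset_closure ⟨n, hn, rfl⟩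
    have hmem : u n ∈ Metric.thickening ε (omegaPt f x) := by
      by_contra hc
      have : u n ∈ (closure (u '' Set.Ioi 0) ∩ (Metric.thickening ε (omegaPt f x))ᶜ) ∩
          ⋂ i ∈ t, closure (u '' Set.Ioi i) := by
        refine ⟨⟨hKmono (Nat.zero_le _) hun, hc⟩, ?_⟩
        exact Set.mem_iInter₂.2 fun i hi => hKmono (Finset.le_sup (f := id) hi) hun
      rw [ht] at this
      exact this
    rcases Metric.mem_thickening_iff.1 hmem with ⟨z, hz, hd⟩
    exact ⟨z, hz, hd⟩
  intro a ha b hb δ hδ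
  obtain ⟨η0, hη0pos, hη0⟩ := Metric.uniformContinuous_iff.1
    (CompactSpace.uniformContinuous_of_continuous hf) (δ / 3) (by linarith)
  set η := min η0 (δ / 3) with hηdef
  have hηpos : 0 < η := lt_min hη0pos (by linarith)
  have hηuc : ∀ p q : X, dist p q < η → dist (f p) (f q) < δ / 3 :=
    fun p q h => hη0 (lt_of_lt_of_le h (min_le_left _ _))
  have hηle : η ≤ δ / 3 := min_le_right _ _
  obtain ⟨M, hM⟩ := hattr η hηpos
  have ha' : a ∈ closure (u '' Set.Ioi M) := Set.mem_iInter.1 (hωdef ▸ ha) M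
  obtain ⟨p, ⟨n1, hn1, rfl⟩, hpa⟩ := Metric.mem_closure_iff.1 ha' η hηpos
  have hb' : b ∈ closure (u '' Set.Ioi n1) := Set.mem_iInter.1 (hωdef ▸ hb) n1
  obtain ⟨q, ⟨n2, hn2, rfl⟩, hqb⟩ := Metric.mem_closure_iff.1 hb' η hηpos
  have hn1M : M < n1 := hn1
  have hn12 : n1 < n2 := hn2
  set N := n2 - n1 with hN
  have hN1 : 1 ≤ N := by omega
  have hn1N : n1 + N = n2 := by omega
  have hw : ∀ i : ℕ, ∃ z ∈ omegaPt f x, dist (u (n1 + i + 1)) z < η :=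
    fun i => hM _ (by omega)
  choose w hwω hwd using hw
  set y : ℕ → X := fun i => if i = 0 then a else if N ≤ i then b else w (i - 1) with hy
  have hy0 : y 0 = a := by simp [hy]
  have hyN : y N = b := by
    simp only [hy]
    rw [if_neg (by omega), if_pos le_rfl]
  have hclose : ∀ i ≤ N, dist (y i) (u (n1 + i)) < η := by
    intro i hi
    rcases Nat.eq_zero_or_pos i with h0 | h0
    · subst h0
      simpa [hy0, dist_comm] using hpa
    rcases eq_or_lt_of_le hi with hiN | hiN
    · subst hiN
      rw [hyN, hn1N]
      simpa [dist_comm] using hqb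
    · have : y i = w (i - 1) := by
        simp only [hy]
        rw [if_neg (by omega), if_neg (by omega)]
      rw [this]
      have := hwd (i - 1)
      have heq : n1 + (i - 1) + 1 = n1 + i := by omega
      rw [heq] at this
      simpa [dist_comm] using this
  refine ⟨N, hN1, y, hy0, hyN, ?_, ?_⟩
  · intro i hi
    rcases Nat.eq_zero_or_pos i with h0 | h0
    · subst h0; rw [hy0]; exact ha
    rcases eq_or_lt_of_le hi with hiN | hiN
    · subst hiN; rw [hyN]; exact hb
    · have : y i = w (i - 1) := by
        simp only [hy]
        rw [if_neg (by omega), if_neg (by omega)]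
      rw [this]; exact hwω _
  · intro i hi
    have h1 : dist (f (y i)) (f (u (n1 + i))) < δ / 3 :=
      hηuc _ _ (hclose i hi.le)
    have h2 : dist (f (u (n1 + i))) (y (i + 1)) < η := by
      rw [hfu, dist_comm]
      have heq : n1 + i + 1 = n1 + (i + 1) := by omega
      rw [heq]
      exact hclose (i + 1) hi
    calc dist (f (y i)) (y (i + 1))
        ≤ dist (f (y i)) (f (u (n1 + i))) + dist (f (u (n1 + i))) (y (i + 1)) :=
          dist_triangle _ _ _
      _ < δ / 3 + η := by linarith
      _ ≤ δ := by linarith
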